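/- (Uniqueness of the pivotal direction.) Let n ≥ 2 and let θ : Fin n → ℝ be an aperiodic gap sequence with θ i > 0 for every i. Then there is no index i ∈ Fin n such that both s_i = M and t_i = M; i.e., no robot attains the lexicographic minimum angle sequence in both directions, so the direction in which the leader has its minimum angle sequence is unique. -/

import Mathlib

/-- The rotation of a gap sequence `θ : Fin n → ℝ` by `k`: `rot k θ = fun j => θ (j + k)`. -/
def rot {n : ℕ} (k : Fin n) (θ : Fin n → ℝ) : Fin n → ℝ := fun j => θ (j + k)

/-- A gap sequence is aperiodic if no nontrivial rotation fixes it. -/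
def Aperiodic {n : ℕ} [NeZero n] (θ : Fin n → ℝ) : Prop :=
  ∀ k : Fin n, k ≠ 0 → rot k θ ≠ θ

/-- Forward angle sequence of robot `i`: `s_i = fun j => θ (i + j)`. -/
def fwd {n : ℕ} (θ : Fin n → ℝ) (i : Fin n) : Fin n → ℝ := fun j => θ (i + j)

/-- Backward angle sequence of robot `i`: `t_i = fun j => θ (i - 1 - j)`. -/
def bwd {n : ℕ} [NeZero n] (θ : Fin n → ℝ) (i : Fin n) : Fin n → ℝ := fun j => θ (i - 1 - j)

/-- Uniqueness of the pivotal direction: no robot attains the lexicographic minimum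
angle sequence `M` in both directions. -/
theorem pivotal_direction_unique {n : ℕ} [NeZero n] (hn : 2 ≤ n) (θ : Fin n → ℝ)
    (hpos : ∀ i, 0 < θ i) (hθ : Aperiodic θ) (M : Lex (Fin n → ℝ))
    (hM : IsLeast ((Set.range fun i : Fin n => toLex (fwd θ i)) ∪
                   (Set.range fun i : Fin n => toLex (bwd θ i))) M) :
    ¬ ∃ i : Fin n, toLex (fwd θ i) = M ∧ toLex (bwd θ i) = M := by
  rintro ⟨i, hs, ht⟩
  set σ : Fin n → ℝ := fwd θ i with hσ
  have hpal : ∀ j : Fin n, σ j = σ (-1 - j) := by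
    intro j
    have h1 : fwd θ i = bwd θ i := toLex.injective (hs.trans ht.symm)
    have h2 := congrFun h1 j
    simp only [fwd, bwd] at h2
    show θ (i + j) = θ (i + (-1 - j))
    rw [h2]; congr 1; open Fin.CommRing in ring
  have hle : ∀ k : Fin n, toLex σ ≤ toLex (rot k σ) := by
    intro k
    have hrk : rot k σ = fwd θ (i + k) := by
      funext j; show θ (i + (j + k)) = θ (i + k + j); congr 1; open Fin.CommRing in ring
    rw [hrk, hs]
    exact hM.2 (Or.inl ⟨i + k, rfl⟩)
  have hap : ∀ k : Fin n, k ≠ 0 → rot k σ ≠ σ := by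
    intro k hk h
    apply hθ k hk
    funext m
    have h2 := congrFun h (m - i)
    simp only [rot, hσ, fwd] at h2
    rw [show i + (m - i + k) = m + k by open Fin.CommRing in ring, show i + (m - i) = m by open Fin.CommRing in ring] at h2
    exact h2
  have hn1 : (-1 : Fin n) ≠ 0 := by
    intro h
    have h1 : (1 : Fin n) = 0 := neg_eq_zero.mp h
    have h2 := congrArg Fin.val h1
    rw [Fin.val_one'] at h2
    simp at h2
    omega
  have hlt : toLex σ < toLex (rot (-1) σ) :=
    lt_of_le_of_ne (hle _) (fun h => hap _ hn1 (toLex.injective h.symm))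
  obtain ⟨j, hj1, hj2⟩ : ∃ j : Fin n, (∀ j', j' < j → σ j' = σ (j' + -1)) ∧ σ j < σ (j + -1) := hlt
  have hj0 : j ≠ 0 := by
    intro h
    rw [h] at hj2
    have h3 : σ (0 + -1 : Fin n) = σ 0 := by
      rw [show ((0 : Fin n) + -1) = -1 - 0 by open Fin.CommRing in ring, ← hpal]
    rw [h3] at hj2
    exact lt_irrefl _ hj2
  have hsub : ∀ j' : Fin n, j' ≠ 0 → (j' + -1 : Fin n).val = j'.val - 1 := by
    intro j' h0
    have hv0 : j'.val ≠ 0 := fun h => h0 (Fin.ext (by rw [h, Fin.val_zero]))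
    rw [show (j' + -1 : Fin n) = j' - 1 by open Fin.CommRing in ring, Fin.sub_def]
    simp only [Fin.val_one']
    rw [Nat.mod_eq_of_lt (show 1 < n by omega)]
    have hlt := j'.isLt
    rw [show n - 1 + j'.val = (j'.val - 1) + n by omega, Nat.add_mod_right,
      Nat.mod_eq_of_lt (by omega)]
  have hconst : ∀ m : ℕ, ∀ j' : Fin n, j'.val = m → j' < j → σ j' = σ 0 := by
    intro m
    induction m using Nat.strong_induction_on with
    | _ m ih =>
      intro j' hm hj'
      rcases eq_or_ne j' 0 with h0 | h0
      · rw [h0]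
      · have hv0 : j'.val ≠ 0 := fun h => h0 (Fin.ext h)
        have hlt' : (j' + -1 : Fin n) < j := by
          refine lt_trans ?_ hj'
          rw [Fin.lt_def, hsub j' h0]
          omega
        rw [hj1 j' hj', ih ((j' + -1 : Fin n).val) (by rw [hsub j' h0]; omega) _ rfl hlt']
  have hjm1 : σ (j + -1) = σ 0 := by
    refine hconst _ _ rfl ?_
    rw [Fin.lt_def, hsub j hj0]
    have : j.val ≠ 0 := fun h => hj0 (Fin.ext h)
    omega
  rw [hjm1] at hj2
  have h0j : σ 0 ≤ σ j := by
    have hlt2 : toLex σ < toLex (rot j σ) :=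
      lt_of_le_of_ne (hle j) (fun h => hap _ hj0 (toLex.injective h.symm))
    obtain ⟨m, hm1, hm2⟩ : ∃ m : Fin n, (∀ m', m' < m → σ m' = σ (m' + j)) ∧ σ m < σ (m + j) := hlt2
    rcases eq_or_ne m 0 with h | h
    · rw [h] at hm2; simpa using hm2.le
    · have h2 := hm1 0 (by
        rw [Fin.lt_def, Fin.val_zero]
        exact Nat.pos_of_ne_zero (fun hh => h (Fin.ext (by rw [hh, Fin.val_zero]))))
      simpa using h2.le
  exact absurd hj2 (not_lt.2 h0j)
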